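/- Let I ⊆ ℝ be an interval and δ ≥ 0. A function f : I → ℝ is δ-convex (i.e., f(tx+(1−t)y) ≤ t f(x) + (1−t) f(y) + δ for all x, y ∈ I, t ∈ [0,1]) if and only if f = g + h where g : I → ℝ is convex and sup_{x∈I} |h(x)| ≤ δ/2. -/
import Mathlib

/-- Carathéodory-type reduction for sorted triples: a nonnegative combination of three
points on the real line can be replaced by a combination of two of them, with the same
barycenter and total mass, and value (w.r.t. any `f`) not larger. -/
lemma reduce3_sorted (f : ℝ → ℝ) (p₁ p₂ p₃ l₁ l₂ l₃ : ℝ)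
    (h12 : p₁ ≤ p₂) (h23 : p₂ ≤ p₃)
    (h₁ : 0 ≤ l₁) (h₂ : 0 ≤ l₂) (h₃ : 0 ≤ l₃) :
    ∃ q₁ q₂ μ₁ μ₂ : ℝ, (q₁ = p₁ ∨ q₁ = p₂ ∨ q₁ = p₃) ∧ (q₂ = p₁ ∨ q₂ = p₂ ∨ q₂ = p₃) ∧
      0 ≤ μ₁ ∧ 0 ≤ μ₂ ∧ μ₁ + μ₂ = l₁ + l₂ + l₃ ∧
      μ₁ * q₁ + μ₂ * q₂ = l₁ * p₁ + l₂ * p₂ + l₃ * p₃ ∧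
      μ₁ * f q₁ + μ₂ * f q₂ ≤ l₁ * f p₁ + l₂ * f p₂ + l₃ * f p₃ := by
  rcases eq_or_lt_of_le h12 with rfl | h12'
  · exact ⟨p₁, p₃, l₁ + l₂, l₃, Or.inl rfl, Or.inr (Or.inr rfl),
      by linarith, h₃, by ring, by ring, le_of_eq (by ring)⟩
  rcases eq_or_lt_of_le h23 with rfl | h23'
  · exact ⟨p₁, p₂, l₁, l₂ + l₃, Or.inl rfl, Or.inr (Or.inl rfl),
      h₁, by linarith, by ring, by ring, le_of_eq (by ring)⟩
  have h13 : p₁ < p₃ := h12'.trans h23'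
  have hne32 : p₃ - p₂ ≠ 0 := ne_of_gt (by linarith)
  have hne21 : p₂ - p₁ ≠ 0 := ne_of_gt (by linarith)
  have hne31 : p₃ - p₁ ≠ 0 := ne_of_gt (by linarith)
  rcases le_or_gt 0 ((p₃-p₂) * f p₁ + (p₁-p₃) * f p₂ + (p₂-p₁) * f p₃) with hd0 | hd0
  · rcases le_total (l₁*(p₂-p₁)) (l₃*(p₃-p₂)) with hc | hc
    · refine ⟨p₂, p₃, l₂ + l₁/(p₃-p₂)*(p₃-p₁), l₃ - l₁/(p₃-p₂)*(p₂-p₁),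
        Or.inr (Or.inl rfl), Or.inr (Or.inr rfl), ?_, ?_, ?_, ?_, ?_⟩
      · have ht : 0 ≤ l₁/(p₃-p₂) := div_nonneg h₁ (by linarith)
        have := mul_nonneg ht (by linarith : (0:ℝ) ≤ p₃ - p₁)
        linarith
      · rw [sub_nonneg, div_mul_eq_mul_div, div_le_iff₀ (by linarith : (0:ℝ) < p₃ - p₂)]
        linarith
      · field_simp
        ring
      · field_simp
        ring
      · have key : l₁*f p₁ + l₂*f p₂ + l₃*f p₃ -
            ((l₂ + l₁/(p₃-p₂)*(p₃-p₁)) * f p₂ + (l₃ - l₁/(p₃-p₂)*(p₂-p₁)) * f p₃)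
            = l₁/(p₃-p₂) * ((p₃-p₂) * f p₁ + (p₁-p₃) * f p₂ + (p₂-p₁) * f p₃) := by
          field_simp
          ring
        have hnn : 0 ≤ l₁/(p₃-p₂) * ((p₃-p₂) * f p₁ + (p₁-p₃) * f p₂ + (p₂-p₁) * f p₃) :=
          mul_nonneg (div_nonneg h₁ (by linarith)) hd0
        linarith
    · refine ⟨p₁, p₂, l₁ - l₃/(p₂-p₁)*(p₃-p₂), l₂ + l₃/(p₂-p₁)*(p₃-p₁),
        Or.inl rfl, Or.inr (Or.inl rfl), ?_, ?_, ?_, ?_, ?_⟩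
      · rw [sub_nonneg, div_mul_eq_mul_div, div_le_iff₀ (by linarith : (0:ℝ) < p₂ - p₁)]
        linarith
      · have ht : 0 ≤ l₃/(p₂-p₁) := div_nonneg h₃ (by linarith)
        have := mul_nonneg ht (by linarith : (0:ℝ) ≤ p₃ - p₁)
        linarith
      · field_simp
        ring
      · field_simp
        ring
      · have key : l₁*f p₁ + l₂*f p₂ + l₃*f p₃ -
            ((l₁ - l₃/(p₂-p₁)*(p₃-p₂)) * f p₁ + (l₂ + l₃/(p₂-p₁)*(p₃-p₁)) * f p₂)
            = l₃/(p₂-p₁) * ((p₃-p₂) * f p₁ + (p₁-p₃) * f p₂ + (p₂-p₁) * f p₃) := by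
          field_simp
          ring
        have hnn : 0 ≤ l₃/(p₂-p₁) * ((p₃-p₂) * f p₁ + (p₁-p₃) * f p₂ + (p₂-p₁) * f p₃) :=
          mul_nonneg (div_nonneg h₃ (by linarith)) hd0
        linarith
  · refine ⟨p₁, p₃, l₁ + l₂/(p₃-p₁)*(p₃-p₂), l₃ + l₂/(p₃-p₁)*(p₂-p₁),
      Or.inl rfl, Or.inr (Or.inr rfl), ?_, ?_, ?_, ?_, ?_⟩
    · have ht : 0 ≤ l₂/(p₃-p₁) := div_nonneg h₂ (by linarith)
      have := mul_nonneg ht (by linarith : (0:ℝ) ≤ p₃ - p₂)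
      linarith
    · have ht : 0 ≤ l₂/(p₃-p₁) := div_nonneg h₂ (by linarith)
      have := mul_nonneg ht (by linarith : (0:ℝ) ≤ p₂ - p₁)
      linarith
    · field_simp
      ring
    · field_simp
      ring
    · have key : l₁*f p₁ + l₂*f p₂ + l₃*f p₃ -
          ((l₁ + l₂/(p₃-p₁)*(p₃-p₂)) * f p₁ + (l₃ + l₂/(p₃-p₁)*(p₂-p₁)) * f p₃)
          = l₂/(p₃-p₁) * (-((p₃-p₂) * f p₁ + (p₁-p₃) * f p₂ + (p₂-p₁) * f p₃)) := by
        field_simp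
        ring
      have hnn : 0 ≤ l₂/(p₃-p₁) * (-((p₃-p₂) * f p₁ + (p₁-p₃) * f p₂ + (p₂-p₁) * f p₃)) :=
        mul_nonneg (div_nonneg h₂ (by linarith)) (by linarith)
      linarith

/-- Carathéodory-type reduction for arbitrary triples. -/
lemma reduce3 (f : ℝ → ℝ) (p₁ p₂ p₃ l₁ l₂ l₃ : ℝ)
    (h₁ : 0 ≤ l₁) (h₂ : 0 ≤ l₂) (h₃ : 0 ≤ l₃) :
    ∃ q₁ q₂ μ₁ μ₂ : ℝ, (q₁ = p₁ ∨ q₁ = p₂ ∨ q₁ = p₃) ∧ (q₂ = p₁ ∨ q₂ = p₂ ∨ q₂ = p₃) ∧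
      0 ≤ μ₁ ∧ 0 ≤ μ₂ ∧ μ₁ + μ₂ = l₁ + l₂ + l₃ ∧
      μ₁ * q₁ + μ₂ * q₂ = l₁ * p₁ + l₂ * p₂ + l₃ * p₃ ∧
      μ₁ * f q₁ + μ₂ * f q₂ ≤ l₁ * f p₁ + l₂ * f p₂ + l₃ * f p₃ := by
  rcases le_total p₁ p₂ with h12 | h21
  · rcases le_total p₂ p₃ with h23 | h32
    · exact reduce3_sorted f p₁ p₂ p₃ l₁ l₂ l₃ h12 h23 h₁ h₂ h₃
    · rcases le_total p₁ p₃ with h13 | h31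
      · obtain ⟨q₁,q₂,μ₁,μ₂,m₁,m₂,n₁,n₂,hs,hp,hv⟩ :=
          reduce3_sorted f p₁ p₃ p₂ l₁ l₃ l₂ h13 h32 h₁ h₃ h₂
        exact ⟨q₁,q₂,μ₁,μ₂, by tauto, by tauto, n₁, n₂, by linarith, by linarith, by linarith⟩
      · obtain ⟨q₁,q₂,μ₁,μ₂,m₁,m₂,n₁,n₂,hs,hp,hv⟩ :=
          reduce3_sorted f p₃ p₁ p₂ l₃ l₁ l₂ h31 h12 h₃ h₁ h₂
        exact ⟨q₁,q₂,μ₁,μ₂, by tauto, by tauto, n₁, n₂, by linarith, by linarith, by linarith⟩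
  · rcases le_total p₁ p₃ with h13 | h31
    · obtain ⟨q₁,q₂,μ₁,μ₂,m₁,m₂,n₁,n₂,hs,hp,hv⟩ :=
        reduce3_sorted f p₂ p₁ p₃ l₂ l₁ l₃ h21 h13 h₂ h₁ h₃
      exact ⟨q₁,q₂,μ₁,μ₂, by tauto, by tauto, n₁, n₂, by linarith, by linarith, by linarith⟩
    · rcases le_total p₂ p₃ with h23 | h32
      · obtain ⟨q₁,q₂,μ₁,μ₂,m₁,m₂,n₁,n₂,hs,hp,hv⟩ :=
          reduce3_sorted f p₂ p₃ p₁ l₂ l₃ l₁ h23 h31 h₂ h₃ h₁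
        exact ⟨q₁,q₂,μ₁,μ₂, by tauto, by tauto, n₁, n₂, by linarith, by linarith, by linarith⟩
      · obtain ⟨q₁,q₂,μ₁,μ₂,m₁,m₂,n₁,n₂,hs,hp,hv⟩ :=
          reduce3_sorted f p₃ p₂ p₁ l₃ l₂ l₁ h32 h21 h₃ h₂ h₁
        exact ⟨q₁,q₂,μ₁,μ₂, by tauto, by tauto, n₁, n₂, by linarith, by linarith, by linarith⟩

/-- **Hyers–Ulam theorem for approximately convex functions.** A function `f : I → ℝ` on an
interval `I` is `δ`-convex (`f(tx+(1-t)y) ≤ t f(x) + (1-t) f(y) + δ` for `x, y ∈ I`,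
`t ∈ [0,1]`) if and only if `f = g + h` with `g` convex on `I` and `sup_{x ∈ I} |h x| ≤ δ/2`. -/
theorem hyers_ulam_delta_convex
    {I : Set ℝ} (hI : Convex ℝ I) {δ : ℝ} (hδ : 0 ≤ δ) (f : ℝ → ℝ) :
    (∀ x ∈ I, ∀ y ∈ I, ∀ t : ℝ, 0 ≤ t → t ≤ 1 →
        f (t * x + (1 - t) * y) ≤ t * f x + (1 - t) * f y + δ) ↔
      (∃ g h : ℝ → ℝ, ConvexOn ℝ I g ∧ (∀ x ∈ I, |h x| ≤ δ / 2) ∧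
        ∀ x ∈ I, f x = g x + h x) := by
  constructor
  · intro hf
    set S : ℝ → Set ℝ := fun x => {v | ∃ a ∈ I, ∃ b ∈ I, ∃ t : ℝ,
      0 ≤ t ∧ t ≤ 1 ∧ t * a + (1 - t) * b = x ∧ v = t * f a + (1 - t) * f b} with hSdef
    have hmem : ∀ x ∈ I, f x ∈ S x := fun x hx =>
      ⟨x, hx, x, hx, 1, zero_le_one, le_refl 1, by ring, by ring⟩
    have hlb : ∀ x ∈ I, ∀ v ∈ S x, f x - δ ≤ v := by
      rintro x hx v ⟨a, ha, b, hb, t, ht0, ht1, hpt, rfl⟩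
      have := hf a ha b hb t ht0 ht1
      rw [hpt] at this
      linarith
    have hbdd : ∀ x ∈ I, BddBelow (S x) := fun x hx => ⟨f x - δ, fun v hv => hlb x hx v hv⟩
    have hne : ∀ x ∈ I, (S x).Nonempty := fun x hx => ⟨f x, hmem x hx⟩
    have hle : ∀ x ∈ I, sInf (S x) ≤ f x := fun x hx => csInf_le (hbdd x hx) (hmem x hx)
    have hge : ∀ x ∈ I, f x - δ ≤ sInf (S x) := fun x hx => le_csInf (hne x hx) (hlb x hx)
    have hkey : ∀ x ∈ I, ∀ y ∈ I, ∀ s r : ℝ, 0 ≤ s → 0 ≤ r → s + r = 1 →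
        ∀ v ∈ S x, ∀ w ∈ S y, sInf (S (s*x + r*y)) ≤ s * v + r * w := by
      intro x hx y hy s r hs hr hsr v hv w hw
      obtain ⟨a, ha, b, hb, t, ht0, ht1, hab, hv'⟩ := hv
      obtain ⟨c, hc, d, hd, u, hu0, hu1, hcd, hw'⟩ := hw
      have hzI : s*x + r*y ∈ I := by
        have := hI hx hy hs hr hsr
        simpa using this
      obtain ⟨q₁, q₂, μ₁, μ₂, hq₁, hq₂, hμ₁, hμ₂, hsum, hpt, hval⟩ :=
        reduce3 f a b c (s*t) (s*(1-t)) (r*u)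
          (mul_nonneg hs ht0) (mul_nonneg hs (by linarith)) (mul_nonneg hr hu0)
      obtain ⟨r₁, r₂, κ₁, κ₂, hr₁, hr₂, hκ₁, hκ₂, hsum2, hpt2, hval2⟩ :=
        reduce3 f q₁ q₂ d μ₁ μ₂ (r*(1-u)) hμ₁ hμ₂ (mul_nonneg hr (by linarith))
      have hq₁I : q₁ ∈ I := by rcases hq₁ with rfl|rfl|rfl <;> assumption
      have hq₂I : q₂ ∈ I := by rcases hq₂ with rfl|rfl|rfl <;> assumption
      have hr₁I : r₁ ∈ I := by rcases hr₁ with rfl|rfl|rfl <;> assumption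
      have hr₂I : r₂ ∈ I := by rcases hr₂ with rfl|rfl|rfl <;> assumption
      have hκsum : κ₁ + κ₂ = 1 := by
        rw [hsum2, hsum]
        linear_combination hsr
      have hptz : κ₁ * r₁ + (1 - κ₁) * r₂ = s*x + r*y := by
        have hk : κ₂ = 1 - κ₁ := by linarith
        rw [← hk]
        linear_combination hpt2 + hpt + s*hab + r*hcd
      have hmemz : κ₁ * f r₁ + (1 - κ₁) * f r₂ ∈ S (s*x + r*y) :=
        ⟨r₁, hr₁I, r₂, hr₂I, κ₁, hκ₁, by linarith, hptz, rfl⟩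
      have hval3 : κ₁ * f r₁ + (1 - κ₁) * f r₂ ≤ s * v + r * w := by
        have hk : κ₂ = 1 - κ₁ := by linarith
        have e1 : s * v = s*t * f a + s*(1-t) * f b := by rw [hv']; ring
        have e2 : r * w = r*u * f c + r*(1-u) * f d := by rw [hw']; ring
        rw [← hk]
        linarith [hval2, hval]
      exact le_trans (csInf_le (hbdd _ hzI) hmemz) hval3
    have hconv : ConvexOn ℝ I (fun x => sInf (S x) + δ/2) := by
      refine ⟨hI, ?_⟩
      intro x hx y hy s r hs hr hsr
      simp only [smul_eq_mul]
      rcases eq_or_lt_of_le hs with rfl | hs'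
      · have hr1 : r = 1 := by linarith
        subst hr1
        norm_num
      rcases eq_or_lt_of_le hr with rfl | hr'
      · have hs1 : s = 1 := by linarith
        subst hs1
        norm_num
      have hzI : s*x + r*y ∈ I := by
        have := hI hx hy hs hr hsr
        simpa using this
      have step1 : ∀ w ∈ S y, sInf (S (s*x + r*y)) ≤ s * sInf (S x) + r * w := by
        intro w hw
        have h2 : (sInf (S (s*x + r*y)) - r*w)/s ≤ sInf (S x) := by
          refine le_csInf (hne x hx) (fun v hv => ?_)
          rw [div_le_iff₀ hs']
          have := hkey x hx y hy s r hs hr hsr v hv w hw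
          linarith
        rw [div_le_iff₀ hs'] at h2
        nlinarith
      have h3 : (sInf (S (s*x + r*y)) - s * sInf (S x))/r ≤ sInf (S y) := by
        refine le_csInf (hne y hy) (fun w hw => ?_)
        rw [div_le_iff₀ hr']
        have := step1 w hw
        linarith
      rw [div_le_iff₀ hr'] at h3
      nlinarith
    refine ⟨fun x => sInf (S x) + δ/2, fun x => f x - (sInf (S x) + δ/2), hconv, ?_, ?_⟩
    · intro x hx
      rw [abs_le]
      constructor
      · have := hle x hx
        linarith
      · have := hge x hx
        linarith
    · intro x hx
      ring
  · rintro ⟨g, h, hg, hh, hfg⟩ x hx y hy t ht0 ht1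
    have h1t : (0:ℝ) ≤ 1 - t := by linarith
    have hzI : t * x + (1 - t) * y ∈ I := by
      have := hI hx hy ht0 h1t (by ring)
      simpa using this
    have hgz : g (t * x + (1 - t) * y) ≤ t * g x + (1 - t) * g y := by
      have := hg.2 hx hy ht0 h1t (by ring)
      simpa using this
    have hhz : h (t * x + (1 - t) * y) ≤ δ/2 := (abs_le.mp (hh _ hzI)).2
    have hhx : -(δ/2) ≤ h x := (abs_le.mp (hh x hx)).1
    have hhy : -(δ/2) ≤ h y := (abs_le.mp (hh y hy)).1
    have e1 : t * (-(δ/2)) ≤ t * h x := mul_le_mul_of_nonneg_left hhx ht0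
    have e2 : (1-t) * (-(δ/2)) ≤ (1-t) * h y := mul_le_mul_of_nonneg_left hhy h1t
    have fx := hfg x hx
    have fy := hfg y hy
    have fz := hfg _ hzI
    nlinarith [hgz, hhz, e1, e2]
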